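/- arXiv:1712.00723 — 6 statements merged into one kernel-verified Lean document; each statement's English description precedes it below -/
import Mathlib

section
/- With the quadrilateral setup below, the alternating sum of the edge averages of the function ξ² − η² satisfies ⨍_{e₁}(ξ²−η²) − ⨍_{e₂}(ξ²−η²) + ⨍_{e₃}(ξ²−η²) − ⨍_{e₄}(ξ²−η²) = 8/3; in particular this value is independent of the shape parameters α and β of the quadrilateral. -/
/-- The average of a function over the segment from `p` to `q`. -/
noncomputable def edgeAvg (p q : ℝ × ℝ) (v : ℝ × ℝ → ℝ) : ℝ :=
  ∫ t in (0:ℝ)..1, v ((1 - t) • p + t • q)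

lemma int_helper (u v w z : ℝ) :
    (∫ t in (0:ℝ)..1, (((1-t)*u + t*v)^2 - ((1-t)*w + t*z)^2))
      = (u^2 + u*v + v^2 - w^2 - w*z - z^2)/3 := by
  have h : ∀ t : ℝ, ((1-t)*u + t*v)^2 - ((1-t)*w + t*z)^2
      = (u^2 - w^2) + (2*(u*v - u^2 - w*z + w^2))*t
        + ((u^2 - 2*u*v + v^2) - (w^2 - 2*w*z + z^2))*t^2 := by
    intro t; ring
  simp only [h]
  have i1 : IntervalIntegrable (fun t : ℝ => 2*(u*v-u^2-w*z+w^2)*t) MeasureTheory.volume 0 1 := by apply Continuous.intervalIntegrable; continuity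
  have i2 : IntervalIntegrable (fun t : ℝ => ((u^2-2*u*v+v^2)-(w^2-2*w*z+z^2))*t^2)
      MeasureTheory.volume 0 1 := by apply Continuous.intervalIntegrable; continuity
  have i0 : IntervalIntegrable (fun t : ℝ => (u^2-w^2) + 2*(u*v-u^2-w*z+w^2)*t)
      MeasureTheory.volume 0 1 := by apply Continuous.intervalIntegrable; continuity
  rw [intervalIntegral.integral_add i0 i2, intervalIntegral.integral_add
    (intervalIntegrable_const) i1, intervalIntegral.integral_const,
    intervalIntegral.integral_const_mul, intervalIntegral.integral_const_mul,
    integral_id, integral_pow]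
  push_cast [smul_eq_mul]
  ring

/-- The alternating sum of the edge averages of ξ² − η² over the four edges of a
quadrilateral equals 8/3, independently of the shape parameters α and β. -/
theorem alternating_sum_edge_averages_xi_sq_sub_eta_sq
    (a₁ a₂ a₃ a₄ O r s : ℝ × ℝ) (ξ η : ℝ × ℝ → ℝ) (α β : ℝ)
    (hO : O = (1/4 : ℝ) • (a₁ + a₂ + a₃ + a₄))
    (hr : r = (1/4 : ℝ) • (a₃ + a₄ - a₁ - a₂))
    (hs : s = (1/4 : ℝ) • (a₄ + a₁ - a₂ - a₃))
    (hind : LinearIndependent ℝ ![r, s])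
    (hcoord : ∀ x : ℝ × ℝ, x = O + ξ x • r + η x • s)
    (ha₄ : a₄ = O + (1 + α) • r + (1 + β) • s) :
    edgeAvg a₁ a₂ (fun x => ξ x ^ 2 - η x ^ 2)
      - edgeAvg a₂ a₃ (fun x => ξ x ^ 2 - η x ^ 2)
      + edgeAvg a₃ a₄ (fun x => ξ x ^ 2 - η x ^ 2)
      - edgeAvg a₄ a₁ (fun x => ξ x ^ 2 - η x ^ 2) = 8 / 3 := by
  rw [LinearIndependent.pair_iff] at hind
  -- uniqueness of coordinates
  have huniq : ∀ c d c' d' : ℝ, O + c • r + d • s = O + c' • r + d' • s →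
      c = c' ∧ d = d' := by
    intro c d c' d' heq
    rw [← sub_eq_zero] at heq
    have h0 : (c - c') • r + (d - d') • s = 0 := by rw [← heq]; module
    obtain ⟨h1, h2⟩ := hind _ _ h0
    exact ⟨sub_eq_zero.mp h1, sub_eq_zero.mp h2⟩
  -- vertex representations
  have hA1 : a₁ = O + (-1-α) • r + (1-β) • s := by
    have h : a₁ = (2:ℝ) • O - a₄ + (2:ℝ) • s := by rw [hO, hs]; module
    rw [h, ha₄]; module
  have hA2 : a₂ = O + (α-1) • r + (β-1) • s := by
    have h : a₂ = a₄ - (2:ℝ) • r - (2:ℝ) • s := by rw [hr, hs]; module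
    rw [h, ha₄]; module
  have hA3 : a₃ = O + (1-α) • r + (-1-β) • s := by
    have h : a₃ = (2:ℝ) • O - a₄ + (2:ℝ) • r := by rw [hO, hr]; module
    rw [h, ha₄]; module
  have hA4 : a₄ = O + (1+α) • r + (1+β) • s := ha₄
  -- affinity of coordinates along segments
  have haff : ∀ (p q : ℝ × ℝ) (cp dp cq dq : ℝ),
      p = O + cp • r + dp • s → q = O + cq • r + dq • s → ∀ t : ℝ,
      ξ ((1-t) • p + t • q) = (1-t)*cp + t*cq ∧
      η ((1-t) • p + t • q) = (1-t)*dp + t*dq := by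
    intro p q cp dp cq dq hp hq t
    have h : (1-t) • p + t • q
        = O + ((1-t)*cp + t*cq) • r + ((1-t)*dp + t*dq) • s := by
      rw [hp, hq]; module
    exact huniq _ _ _ _ ((hcoord _).symm.trans h)
  have hedge : ∀ (p q : ℝ × ℝ) (cp dp cq dq : ℝ),
      p = O + cp • r + dp • s → q = O + cq • r + dq • s →
      edgeAvg p q (fun x => ξ x ^ 2 - η x ^ 2)
        = (cp^2 + cp*cq + cq^2 - dp^2 - dp*dq - dq^2)/3 := by
    intro p q cp dp cq dq hp hq
    rw [edgeAvg, ← int_helper cp cq dp dq]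
    apply intervalIntegral.integral_congr
    intro t _
    obtain ⟨h1, h2⟩ := haff p q cp dp cq dq hp hq t
    simp only [h1, h2]
  rw [hedge a₁ a₂ _ _ _ _ hA1 hA2, hedge a₂ a₃ _ _ _ _ hA2 hA3,
    hedge a₃ a₄ _ _ _ _ hA3 hA4, hedge a₄ a₁ _ _ _ _ hA4 hA1]
  ring
end

section
/- (Unisolvence of the quadrilateral generalized bilinear element.) With the quadrilateral setup below and assuming Q is convex, i.e. |α| + |β| < 1, the following holds: for every (d₁, d₂, d₃, d₄) ∈ ℝ⁴ there exist unique real coefficients c₀, c₁, c₂, c₃ such that the function v : ℝ² → ℝ defined by v(x) = c₀ + c₁·ξ(x) + c₂·η(x) + c₃·(ξ(x)² − η(x)²) satisfies ⨍_{eᵢ} v = dᵢ for i = 1, 2, 3, 4. -/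
private lemma int_poly (k0 k1 k2 : ℝ) :
    (∫ t in (0:ℝ)..1, (k0 + k1 * t + k2 * t ^ 2)) = k0 + k1 / 2 + k2 / 3 := by
  have h : (∫ t in (0:ℝ)..1, (k0 + k1 * t + k2 * t ^ 2))
      = (∫ t in (0:ℝ)..1, (k0 + k1 * t)) + (∫ t in (0:ℝ)..1, k2 * t ^ 2) := by
    apply intervalIntegral.integral_add
    · exact (Continuous.intervalIntegrable (by continuity) _ _)
    · exact (Continuous.intervalIntegrable (by continuity) _ _)
  have h2 : (∫ t in (0:ℝ)..1, (k0 + k1 * t))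
      = (∫ t in (0:ℝ)..1, (k0:ℝ)) + (∫ t in (0:ℝ)..1, k1 * t) := by
    apply intervalIntegral.integral_add
    · exact (Continuous.intervalIntegrable (by continuity) _ _)
    · exact (Continuous.intervalIntegrable (by continuity) _ _)
  rw [h, h2, intervalIntegral.integral_const, intervalIntegral.integral_const_mul,
    intervalIntegral.integral_const_mul, integral_id, integral_pow]
  norm_num
  ring

/-- Edge average of a QGB function in terms of endpoint coordinates. -/
private lemma edge_formula (p q : ℝ × ℝ) (ξ η : ℝ × ℝ → ℝ)
    (hξ : ∀ t : ℝ, ξ ((1 - t) • p + t • q) = (1 - t) * ξ p + t * ξ q)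
    (hη : ∀ t : ℝ, η ((1 - t) • p + t • q) = (1 - t) * η p + t * η q)
    (c0 c1 c2 c3 : ℝ) :
    edgeAvg p q (fun x => c0 + c1 * ξ x + c2 * η x + c3 * (ξ x ^ 2 - η x ^ 2))
      = c0 + c1 * (ξ p + ξ q) / 2 + c2 * (η p + η q) / 2
        + c3 * ((ξ p ^ 2 + ξ p * ξ q + ξ q ^ 2) - (η p ^ 2 + η p * η q + η q ^ 2)) / 3 := by
  set A := ξ p; set B := ξ q; set C := η p; set D := η q
  have key : edgeAvg p q (fun x => c0 + c1 * ξ x + c2 * η x + c3 * (ξ x ^ 2 - η x ^ 2))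
      = ∫ t in (0:ℝ)..1,
          ((c0 + c1 * A + c2 * C + c3 * (A ^ 2 - C ^ 2))
            + (c1 * (B - A) + c2 * (D - C) + c3 * (2 * A * (B - A) - 2 * C * (D - C))) * t
            + (c3 * ((B - A) ^ 2 - (D - C) ^ 2)) * t ^ 2) := by
    unfold edgeAvg
    apply intervalIntegral.integral_congr
    intro t _
    simp only [hξ t, hη t]
    ring
  rw [key, int_poly]
  ring

/-- Unisolvence of the quadrilateral generalized bilinear (QGB) element: on a convex
quadrilateral (|α| + |β| < 1), for any prescribed edge averages d₁, d₂, d₃, d₄ there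
are unique coefficients c₀, c₁, c₂, c₃ such that the function
c₀ + c₁ξ + c₂η + c₃(ξ² − η²) has those edge averages. -/
theorem qgb_unisolvence
    (a₁ a₂ a₃ a₄ O r s : ℝ × ℝ) (ξ η : ℝ × ℝ → ℝ) (α β : ℝ)
    (hO : O = (1/4 : ℝ) • (a₁ + a₂ + a₃ + a₄))
    (hr : r = (1/4 : ℝ) • (a₃ + a₄ - a₁ - a₂))
    (hs : s = (1/4 : ℝ) • (a₄ + a₁ - a₂ - a₃))
    (hind : LinearIndependent ℝ ![r, s])
    (hcoord : ∀ x : ℝ × ℝ, x = O + ξ x • r + η x • s)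
    (ha₄ : a₄ = O + (1 + α) • r + (1 + β) • s)
    (hconv : |α| + |β| < 1) :
    ∀ d₁ d₂ d₃ d₄ : ℝ,
      ∃! c : ℝ × ℝ × ℝ × ℝ,
        edgeAvg a₁ a₂
          (fun x => c.1 + c.2.1 * ξ x + c.2.2.1 * η x + c.2.2.2 * (ξ x ^ 2 - η x ^ 2)) = d₁ ∧
        edgeAvg a₂ a₃
          (fun x => c.1 + c.2.1 * ξ x + c.2.2.1 * η x + c.2.2.2 * (ξ x ^ 2 - η x ^ 2)) = d₂ ∧
        edgeAvg a₃ a₄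
          (fun x => c.1 + c.2.1 * ξ x + c.2.2.1 * η x + c.2.2.2 * (ξ x ^ 2 - η x ^ 2)) = d₃ ∧
        edgeAvg a₄ a₁
          (fun x => c.1 + c.2.1 * ξ x + c.2.2.1 * η x + c.2.2.2 * (ξ x ^ 2 - η x ^ 2)) = d₄ := by
  -- uniqueness of coordinates w.r.t. the basis r, s
  have huniq : ∀ u v u' v' : ℝ, u • r + v • s = u' • r + v' • s → u = u' ∧ v = v' := by
    intro u v u' v' h
    have h0 : (u - u') • r + (v - v') • s = 0 := by
      rw [sub_smul, sub_smul, sub_add_sub_comm, h, sub_self]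
    obtain ⟨h1, h2⟩ := (LinearIndependent.pair_iff.1 hind) _ _ h0
    exact ⟨by linarith, by linarith⟩
  have hcoordval : ∀ (x : ℝ × ℝ) (u v : ℝ), x = O + u • r + v • s → ξ x = u ∧ η x = v := by
    intro x u v hx
    apply huniq
    have h1 := hcoord x
    have : O + ξ x • r + η x • s = O + u • r + v • s := by rw [← h1, ← hx]
    have h2 := congrArg (fun y : ℝ × ℝ => y - O) this
    simpa [add_assoc, add_sub_cancel_left] using h2
  -- express all four vertices in barycentric-type coordinates
  have hw : α • r + β • s = a₄ - O - r - s := by rw [ha₄]; module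
  have ha₁ : a₁ = O + (-1 - α) • r + (1 - β) • s := by
    have h : O + (-1 - α) • r + (1 - β) • s = O - r + s - (α • r + β • s) := by module
    rw [h, hw, hO, hs, hr]; module
  have ha₂ : a₂ = O + (α - 1) • r + (β - 1) • s := by
    have h : O + (α - 1) • r + (β - 1) • s = O - r - s + (α • r + β • s) := by module
    rw [h, hw, hr, hs]; module
  have ha₃ : a₃ = O + (1 - α) • r + (-1 - β) • s := by
    have h : O + (1 - α) • r + (-1 - β) • s = O + r - s - (α • r + β • s) := by module
    rw [h, hw, hO, hr]; module
  -- edge-average formula in terms of endpoint coordinates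
  have Hedge : ∀ (p q : ℝ × ℝ) (u₁ v₁ u₂ v₂ : ℝ),
      p = O + u₁ • r + v₁ • s → q = O + u₂ • r + v₂ • s →
      ∀ c0 c1 c2 c3 : ℝ,
        edgeAvg p q (fun x => c0 + c1 * ξ x + c2 * η x + c3 * (ξ x ^ 2 - η x ^ 2))
          = c0 + c1 * (u₁ + u₂) / 2 + c2 * (v₁ + v₂) / 2
            + c3 * ((u₁ ^ 2 + u₁ * u₂ + u₂ ^ 2) - (v₁ ^ 2 + v₁ * v₂ + v₂ ^ 2)) / 3 := by
    intro p q u₁ v₁ u₂ v₂ hp hq c0 c1 c2 c3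
    have hup := hcoordval p u₁ v₁ hp
    have huq := hcoordval q u₂ v₂ hq
    have hmid : ∀ t : ℝ,
        ξ ((1 - t) • p + t • q) = (1 - t) * u₁ + t * u₂ ∧
        η ((1 - t) • p + t • q) = (1 - t) * v₁ + t * v₂ := by
      intro t
      apply hcoordval
      rw [hp, hq]; module
    have hx : ∀ t : ℝ, ξ ((1 - t) • p + t • q) = (1 - t) * ξ p + t * ξ q := by
      intro t; rw [(hmid t).1, hup.1, huq.1]
    have hy : ∀ t : ℝ, η ((1 - t) • p + t • q) = (1 - t) * η p + t * η q := by
      intro t; rw [(hmid t).2, hup.2, huq.2]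
    rw [edge_formula p q ξ η hx hy, hup.1, hup.2, huq.1, huq.2]
  intro d₁ d₂ d₃ d₄
  set c3 : ℝ := 3 * ((d₁ + d₃) - (d₂ + d₄)) / 8 with hc3
  set c1 : ℝ := (d₃ - d₁) / 2 + (2 * β / 3) * c3 with hc1
  set c2 : ℝ := (d₄ - d₂) / 2 - (2 * α / 3) * c3 with hc2
  set c0 : ℝ := d₁ + c1 - c3 * ((3 + α ^ 2 - (1 - β) ^ 2) / 3) with hc0
  refine ⟨(c0, c1, c2, c3), ⟨?_, ?_, ?_, ?_⟩, ?_⟩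
  · rw [Hedge a₁ a₂ (-1 - α) (1 - β) (α - 1) (β - 1) ha₁ ha₂]
    rw [hc0, hc1, hc3]; ring
  · rw [Hedge a₂ a₃ (α - 1) (β - 1) (1 - α) (-1 - β) ha₂ ha₃]
    rw [hc0, hc1, hc2, hc3]; ring
  · rw [Hedge a₃ a₄ (1 - α) (-1 - β) (1 + α) (1 + β) ha₃ ha₄]
    rw [hc0, hc1, hc3]; ring
  · rw [Hedge a₄ a₁ (1 + α) (1 + β) (-1 - α) (1 - β) ha₄ ha₁]
    rw [hc0, hc1, hc2, hc3]; ring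
  · rintro ⟨x0, x1, x2, x3⟩ ⟨E1, E2, E3, E4⟩
    rw [Hedge a₁ a₂ (-1 - α) (1 - β) (α - 1) (β - 1) ha₁ ha₂] at E1
    rw [Hedge a₂ a₃ (α - 1) (β - 1) (1 - α) (-1 - β) ha₂ ha₃] at E2
    rw [Hedge a₃ a₄ (1 - α) (-1 - β) (1 + α) (1 + β) ha₃ ha₄] at E3
    rw [Hedge a₄ a₁ (1 + α) (1 + β) (-1 - α) (1 - β) ha₄ ha₁] at E4
    have hx3 : x3 = c3 := by
      rw [hc3]; linear_combination (3/8 : ℝ) * E1 - (3/8 : ℝ) * E2 + (3/8 : ℝ) * E3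
        - (3/8 : ℝ) * E4
    have hx1 : x1 = c1 := by
      rw [hc1, hc3]
      linear_combination (-1/2 : ℝ) * E1 + (1/2 : ℝ) * E3
        + (β/4 : ℝ) * (E1 - E2 + E3 - E4)
    have hx2 : x2 = c2 := by
      rw [hc2, hc3]
      linear_combination (-1/2 : ℝ) * E2 + (1/2 : ℝ) * E4
        - (α/4 : ℝ) * (E1 - E2 + E3 - E4)
    have hx0 : x0 = c0 := by
      rw [hc0, hc1, hc3]
      linear_combination E1 + (-1/2 : ℝ) * E1 + (1/2 : ℝ) * E3
        + (β/4 : ℝ) * (E1 - E2 + E3 - E4)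
        - ((3 + α ^ 2 - (1 - β) ^ 2) / 8 : ℝ) * (E1 - E2 + E3 - E4)
    simp [hx0, hx1, hx2, hx3]
end

section
/- With the quadrilateral setup below, let v : ℝ² → ℝ be of the form v(x) = c₀ + c₁·ξ(x) + c₂·η(x) + c₃·(ξ(x)² − η(x)²) with real coefficients c₀, c₁, c₂, c₃, and set dᵢ = ⨍_{eᵢ} v for i = 1, 2, 3, 4. Then c₃ = (3/8)·(d₁ + d₃ − d₂ − d₄). Consequently, v is an affine function (i.e. c₃ = 0) if and only if d₁ + d₃ = d₂ + d₄. -/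
private lemma qgb_poly_int (A B C : ℝ) :
    ∫ t in (0:ℝ)..1, (A + B*t + C*t^2) = A + B/2 + C/3 := by
  have h : ∀ t ∈ Set.uIcc (0:ℝ) 1, HasDerivAt (fun t => A*t + B*t^2/2 + C*t^3/3) (A + B*t + C*t^2) t := by
    intro t _
    have : HasDerivAt (fun t : ℝ => A*t + B*t^2/2 + C*t^3/3) (A*1 + B*(2*t^1)/2 + C*(3*t^2)/3) t := by
      apply HasDerivAt.add
      apply HasDerivAt.add
      · exact (hasDerivAt_id t).const_mul A
      · exact ((hasDerivAt_pow 2 t).const_mul B).div_const 2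
      · exact ((hasDerivAt_pow 3 t).const_mul C).div_const 3
    convert this using 1; ring
  rw [intervalIntegral.integral_eq_sub_of_hasDerivAt h (by apply Continuous.intervalIntegrable; continuity)]
  ring

/-- For a QGB element function v = c₀ + c₁ξ + c₂η + c₃(ξ²−η²) with edge averages
dᵢ = ⨍_{eᵢ} v, the top coefficient satisfies c₃ = (3/8)(d₁ + d₃ − d₂ − d₄);
consequently v is affine (c₃ = 0) iff d₁ + d₃ = d₂ + d₄. -/
theorem qgb_top_coefficient_from_edge_averages
    (a₁ a₂ a₃ a₄ O r s : ℝ × ℝ) (ξ η : ℝ × ℝ → ℝ) (α β : ℝ)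
    (hO : O = (1/4 : ℝ) • (a₁ + a₂ + a₃ + a₄))
    (hr : r = (1/4 : ℝ) • (a₃ + a₄ - a₁ - a₂))
    (hs : s = (1/4 : ℝ) • (a₄ + a₁ - a₂ - a₃))
    (hind : LinearIndependent ℝ ![r, s])
    (hcoord : ∀ x : ℝ × ℝ, x = O + ξ x • r + η x • s)
    (ha₄ : a₄ = O + (1 + α) • r + (1 + β) • s)
    (v : ℝ × ℝ → ℝ) (c₀ c₁ c₂ c₃ d₁ d₂ d₃ d₄ : ℝ)
    (hv : v = fun x => c₀ + c₁ * ξ x + c₂ * η x + c₃ * (ξ x ^ 2 - η x ^ 2))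
    (hd₁ : d₁ = edgeAvg a₁ a₂ v) (hd₂ : d₂ = edgeAvg a₂ a₃ v)
    (hd₃ : d₃ = edgeAvg a₃ a₄ v) (hd₄ : d₄ = edgeAvg a₄ a₁ v) :
    c₃ = 3 / 8 * (d₁ + d₃ - d₂ - d₄) ∧ (c₃ = 0 ↔ d₁ + d₃ = d₂ + d₄) := by
  have huniq : ∀ x y x' y' : ℝ, x • r + y • s = x' • r + y' • s → x = x' ∧ y = y' := by
    intro x y x' y' h
    have h0 : (x - x') • r + (y - y') • s = 0 := by
      linear_combination (norm := module) h
    obtain ⟨h1, h2⟩ := LinearIndependent.pair_iff.mp hind (x - x') (y - y') h0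
    exact ⟨sub_eq_zero.mp h1, sub_eq_zero.mp h2⟩
  have h1 := hcoord a₁
  have h2 := hcoord a₂
  have h3 := hcoord a₃
  have h4 := hcoord a₄
  -- coordinates of a₄
  have e4 : ξ a₄ = 1 + α ∧ η a₄ = 1 + β := by
    apply huniq
    linear_combination (norm := module) ha₄ - h4
  -- sum equation
  have eO : (ξ a₁ + ξ a₂ + ξ a₃ + ξ a₄) = 0 ∧ (η a₁ + η a₂ + η a₃ + η a₄) = 0 := by
    apply huniq _ _ 0 0
    linear_combination (norm := module) - h1 - h2 - h3 - h4 - (4:ℝ) • hO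
  have eR : (ξ a₃ + ξ a₄ - ξ a₁ - ξ a₂) = 4 ∧ (η a₃ + η a₄ - η a₁ - η a₂) = 0 := by
    apply huniq
    linear_combination (norm := module) - h3 - h4 + h1 + h2 - (4:ℝ) • hr
  have eS : (ξ a₄ + ξ a₁ - ξ a₂ - ξ a₃) = 0 ∧ (η a₄ + η a₁ - η a₂ - η a₃) = 4 := by
    apply huniq
    linear_combination (norm := module) - h4 - h1 + h2 + h3 - (4:ℝ) • hs
  obtain ⟨x4, y4⟩ := e4
  obtain ⟨xO, yO⟩ := eO
  obtain ⟨xR, yR⟩ := eR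
  obtain ⟨xS, yS⟩ := eS
  have x1 : ξ a₁ = -1 - α := by linarith
  have x2 : ξ a₂ = -1 + α := by linarith
  have x3 : ξ a₃ = 1 - α := by linarith
  have y1 : η a₁ = 1 - β := by linarith
  have y2 : η a₂ = -1 + β := by linarith
  have y3 : η a₃ = -1 - β := by linarith
  -- affinity of ξ, η on segments
  have haff : ∀ (p q : ℝ × ℝ) (t : ℝ),
      ξ ((1 - t) • p + t • q) = (1 - t) * ξ p + t * ξ q ∧
      η ((1 - t) • p + t • q) = (1 - t) * η p + t * η q := by
    intro p q t
    apply huniq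
    have hx := hcoord ((1 - t) • p + t • q)
    linear_combination (norm := module) (1 - t) • hcoord p + t • hcoord q - hx
  -- edge average formula
  have havg : ∀ p q : ℝ × ℝ, edgeAvg p q v =
      c₀ + c₁ * (ξ p + ξ q) / 2 + c₂ * (η p + η q) / 2 +
        c₃ * ((ξ p ^ 2 + ξ p * ξ q + ξ q ^ 2) / 3 - (η p ^ 2 + η p * η q + η q ^ 2) / 3) := by
    intro p q
    have hfe : (fun t : ℝ => v ((1 - t) • p + t • q)) =
        fun t : ℝ => (c₀ + c₁ * ξ p + c₂ * η p + c₃ * (ξ p ^ 2 - η p ^ 2)) +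
          (c₁ * (ξ q - ξ p) + c₂ * (η q - η p) +
            c₃ * (2 * ξ p * (ξ q - ξ p) - 2 * η p * (η q - η p))) * t +
          (c₃ * ((ξ q - ξ p) ^ 2 - (η q - η p) ^ 2)) * t ^ 2 := by
      funext t
      obtain ⟨hx, hy⟩ := haff p q t
      rw [hv]
      simp only []
      rw [hx, hy]
      ring
    rw [edgeAvg, hfe, qgb_poly_int]
    ring
  have D1 := hd₁; rw [havg a₁ a₂, x1, x2, y1, y2] at D1
  have D2 := hd₂; rw [havg a₂ a₃, x2, x3, y2, y3] at D2
  have D3 := hd₃; rw [havg a₃ a₄, x3, x4, y3, y4] at D3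
  have D4 := hd₄; rw [havg a₄ a₁, x4, x1, y4, y1] at D4
  have key : c₃ = 3 / 8 * (d₁ + d₃ - d₂ - d₄) := by
    rw [D1, D2, D3, D4]; ring
  refine ⟨key, ?_, ?_⟩
  · intro h
    have : (3:ℝ)/8 * (d₁ + d₃ - d₂ - d₄) = 0 := by rw [← key, h]
    linarith [this]
  · intro h
    rw [key]; linarith
end

section
/- (Unisolvence of the quadrilateral Wilson element.) With the quadrilateral setup below and assuming Q is convex, i.e. |α| + |β| < 1, the following holds: for every (v₁, v₂, v₃, v₄, c₅, c₆) ∈ ℝ⁶ there exists a unique polynomial function p : ℝ² → ℝ of total degree at most 2 such that p(aᵢ) = vᵢ for i = 1, 2, 3, 4, and ∫_Q D²p(x)(r, r) dx = c₅ and ∫_Q D²p(x)(s, s) dx = c₆, where Q denotes the convex hull of {a₁, a₂, a₃, a₄}, the integrals are with respect to two-dimensional Lebesgue measure, and D²p(x)(u, u) denotes the second directional derivative of p at x along the vector u (which, for p of degree at most 2, is a constant function of x; D²p(·)(r,r) and D²p(·)(s,s) are the second derivatives ∂_ξξ p and ∂_ηη p in the (ξ,η)-coordinates). -/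
open MeasureTheory

theorem wilson_det_ne (r s : ℝ × ℝ) (h : LinearIndependent ℝ ![r, s]) :
    r.1 * s.2 - r.2 * s.1 ≠ 0 := by
  intro hd
  rw [LinearIndependent.pair_iff] at h
  have h1 := h s.2 (-r.2) (by
    apply Prod.ext <;> simp <;> nlinarith [hd])
  have h2 := h (-s.1) r.1 (by
    apply Prod.ext <;> simp <;> nlinarith [hd])
  have h3 := h 1 0 (by
    apply Prod.ext <;> simp <;> [skip; skip] <;> linarith [h1.2, h2.2])
  exact one_ne_zero h3.1

theorem wilson_span_top (u v : ℝ × ℝ) (h : u.1 * v.2 - u.2 * v.1 ≠ 0) :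
    Submodule.span ℝ {u, v} = ⊤ := by
  rw [Submodule.eq_top_iff']
  intro z
  rw [Submodule.mem_span_pair]
  refine ⟨(z.1 * v.2 - z.2 * v.1) / (u.1 * v.2 - u.2 * v.1),
    (u.1 * z.2 - u.2 * z.1) / (u.1 * v.2 - u.2 * v.1), ?_⟩
  apply Prod.ext <;> simp
  · linear_combination z.1 * mul_inv_cancel₀ h
  · linear_combination z.2 * mul_inv_cancel₀ h

theorem wilson_vol_pos (a₁ a₂ a₃ a₄ : ℝ × ℝ)
    (h : (a₄.1 - a₂.1) * (a₁.2 - a₂.2) - (a₄.2 - a₂.2) * (a₁.1 - a₂.1) ≠ 0) :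
    0 < (volume (convexHull ℝ {a₁, a₂, a₃, a₄} : Set (ℝ × ℝ))).toReal := by
  rw [ENNReal.toReal_pos_iff]
  constructor
  · apply MeasureTheory.Measure.measure_pos_of_nonempty_interior volume
    rw [(convex_convexHull ℝ _).interior_nonempty_iff_affineSpan_eq_top,
      affineSpan_convexHull]
    have hne : ({a₁, a₂, a₃, a₄} : Set (ℝ × ℝ)).Nonempty := ⟨a₁, by simp⟩
    rw [AffineSubspace.affineSpan_eq_top_iff_vectorSpan_eq_top_of_nonempty ℝ (ℝ × ℝ) (ℝ × ℝ) hne]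
    have hsub : Submodule.span ℝ {a₄ - a₂, a₁ - a₂}
        ≤ vectorSpan ℝ ({a₁, a₂, a₃, a₄} : Set (ℝ × ℝ)) := by
      apply Submodule.span_le.mpr
      rintro x (rfl | rfl)
      · exact vsub_mem_vectorSpan ℝ (by simp) (by simp)
      · exact vsub_mem_vectorSpan ℝ (by simp) (by simp)
    have htop : Submodule.span ℝ {a₄ - a₂, a₁ - a₂} = ⊤ := by
      apply wilson_span_top
      simpa using h
    exact top_unique (htop ▸ hsub)
  · exact (((Set.finite_singleton a₄).insert a₃ |>.insert a₂
      |>.insert a₁).isCompact_convexHull ℝ).measure_lt_top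

theorem wilson_iter2 (c20 c11 c02 c10 c01 c00 : ℝ) (x u : ℝ × ℝ) :
    iteratedFDeriv ℝ 2 (fun y : ℝ × ℝ => c20 * y.1 ^ 2 + c11 * y.1 * y.2 + c02 * y.2 ^ 2
      + c10 * y.1 + c01 * y.2 + c00) x ![u, u]
    = 2 * c20 * u.1 ^ 2 + 2 * c11 * (u.1 * u.2) + 2 * c02 * u.2 ^ 2 := by
  set fst := ContinuousLinearMap.fst ℝ ℝ ℝ with hfstdef
  set snd := ContinuousLinearMap.snd ℝ ℝ ℝ with hsnddef
  set M1 : ℝ × ℝ →L[ℝ] ℝ := (2 * c20) • fst + c11 • snd with hM1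
  set M2 : ℝ × ℝ →L[ℝ] ℝ := c11 • fst + (2 * c02) • snd with hM2
  set K : ℝ × ℝ →L[ℝ] ℝ := c10 • fst + c01 • snd with hK
  have key : ∀ y : ℝ × ℝ, HasFDerivAt
      (fun y : ℝ × ℝ => c20 * y.1 ^ 2 + c11 * y.1 * y.2 + c02 * y.2 ^ 2
        + c10 * y.1 + c01 * y.2 + c00) (y.1 • M1 + y.2 • M2 + K) y := by
    intro y
    have H : HasFDerivAt
        (fun y : ℝ × ℝ => c20 * (y.1 * y.1) + c11 * (y.1 * y.2) + c02 * (y.2 * y.2)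
          + c10 * y.1 + c01 * y.2 + c00) (y.1 • M1 + y.2 • M2 + K) y := by
      have hf : HasFDerivAt (fun p : ℝ × ℝ => p.1) (fst : ℝ × ℝ →L[ℝ] ℝ) y := hasFDerivAt_fst
      have hs : HasFDerivAt (fun p : ℝ × ℝ => p.2) (snd : ℝ × ℝ →L[ℝ] ℝ) y := hasFDerivAt_snd
      have h := (((((hf.mul hf).const_mul c20).add
        ((hf.mul hs).const_mul c11)).add
        ((hs.mul hs).const_mul c02)).add
        (hf.const_mul c10)).add
        (hs.const_mul c01) |>.add_const c00
      apply h.congr_fderiv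
      ext <;> simp [hM1, hM2, hK, hfstdef, hsnddef] <;> ring
    have heq : (fun y : ℝ × ℝ => c20 * y.1 ^ 2 + c11 * y.1 * y.2 + c02 * y.2 ^ 2
        + c10 * y.1 + c01 * y.2 + c00)
        = (fun y : ℝ × ℝ => c20 * (y.1 * y.1) + c11 * (y.1 * y.2) + c02 * (y.2 * y.2)
          + c10 * y.1 + c01 * y.2 + c00) := by funext y; ring
    rw [heq]; exact H
  have hfd : fderiv ℝ (fun y : ℝ × ℝ => c20 * y.1 ^ 2 + c11 * y.1 * y.2 + c02 * y.2 ^ 2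
      + c10 * y.1 + c01 * y.2 + c00) = fun y : ℝ × ℝ => y.1 • M1 + y.2 • M2 + K := by
    funext y; exact (key y).fderiv
  have h2 : HasFDerivAt (fun y : ℝ × ℝ => y.1 • M1 + y.2 • M2 + K)
      (fst.smulRight M1 + snd.smulRight M2) x := by
    have hf : HasFDerivAt (fun p : ℝ × ℝ => p.1) (fst : ℝ × ℝ →L[ℝ] ℝ) x := hasFDerivAt_fst
    have hs : HasFDerivAt (fun p : ℝ × ℝ => p.2) (snd : ℝ × ℝ →L[ℝ] ℝ) x := hasFDerivAt_snd
    exact ((hf.smul_const M1).add (hs.smul_const M2)).add_const K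
  rw [iteratedFDeriv_two_apply, hfd, h2.fderiv]
  simp [hM1, hM2, hfstdef, hsnddef]
  ring

set_option maxHeartbeats 3200000 in
theorem wilson_solve4 (α β v₁ v₂ v₃ v₄ A C : ℝ) (h : 1 - α ^ 2 - β ^ 2 ≠ 0) :
    ∃ B D E F : ℝ,
      A * (-1 - α) ^ 2 + B * (-1 - α) * (1 - β) + C * (1 - β) ^ 2
        + D * (-1 - α) + E * (1 - β) + F = v₁ ∧
      A * (α - 1) ^ 2 + B * (α - 1) * (β - 1) + C * (β - 1) ^ 2
        + D * (α - 1) + E * (β - 1) + F = v₂ ∧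
      A * (1 - α) ^ 2 + B * (1 - α) * (-1 - β) + C * (-1 - β) ^ 2
        + D * (1 - α) + E * (-1 - β) + F = v₃ ∧
      A * (1 + α) ^ 2 + B * (1 + α) * (1 + β) + C * (1 + β) ^ 2
        + D * (1 + α) + E * (1 + β) + F = v₄ := by
  obtain ⟨w₁, hw₁⟩ : ∃ w, v₁ - A * (1 + α) ^ 2 - C * (1 - β) ^ 2 = w := ⟨_, rfl⟩
  obtain ⟨w₂, hw₂⟩ : ∃ w, v₂ - A * (1 - α) ^ 2 - C * (1 - β) ^ 2 = w := ⟨_, rfl⟩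
  obtain ⟨w₃, hw₃⟩ : ∃ w, v₃ - A * (1 - α) ^ 2 - C * (1 + β) ^ 2 = w := ⟨_, rfl⟩
  obtain ⟨w₄, hw₄⟩ : ∃ w, v₄ - A * (1 + α) ^ 2 - C * (1 + β) ^ 2 = w := ⟨_, rfl⟩
  refine ⟨((w₄ - w₁ + w₂ - w₃) / 4 - α * (w₃ + w₄ - w₁ - w₂) / 4
      - β * (w₄ + w₁ - w₂ - w₃) / 4) / (1 - α ^ 2 - β ^ 2),
    (w₃ + w₄ - w₁ - w₂) / 4 - α * (((w₄ - w₁ + w₂ - w₃) / 4 - α * (w₃ + w₄ - w₁ - w₂) / 4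
      - β * (w₄ + w₁ - w₂ - w₃) / 4) / (1 - α ^ 2 - β ^ 2)),
    (w₄ + w₁ - w₂ - w₃) / 4 - β * (((w₄ - w₁ + w₂ - w₃) / 4 - α * (w₃ + w₄ - w₁ - w₂) / 4
      - β * (w₄ + w₁ - w₂ - w₃) / 4) / (1 - α ^ 2 - β ^ 2)),
    (w₁ + w₂ + w₃ + w₄) / 4 - α * β * (((w₄ - w₁ + w₂ - w₃) / 4 - α * (w₃ + w₄ - w₁ - w₂) / 4
      - β * (w₄ + w₁ - w₂ - w₃) / 4) / (1 - α ^ 2 - β ^ 2)),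
    ?_, ?_, ?_, ?_⟩
  · rw [show v₁ = w₁ + A * (1 + α) ^ 2 + C * (1 - β) ^ 2 by rw [← hw₁]; ring]
    field_simp
    ring
  · rw [show v₂ = w₂ + A * (1 - α) ^ 2 + C * (1 - β) ^ 2 by rw [← hw₂]; ring]
    field_simp
    ring
  · rw [show v₃ = w₃ + A * (1 - α) ^ 2 + C * (1 + β) ^ 2 by rw [← hw₃]; ring]
    field_simp
    ring
  · rw [show v₄ = w₄ + A * (1 + α) ^ 2 + C * (1 + β) ^ 2 by rw [← hw₄]; ring]
    field_simp
    ring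

theorem wilson_uniq4 (α β B D E F : ℝ) (h : 1 - α ^ 2 - β ^ 2 ≠ 0)
    (h1 : B * (-1 - α) * (1 - β) + D * (-1 - α) + E * (1 - β) + F = 0)
    (h2 : B * (α - 1) * (β - 1) + D * (α - 1) + E * (β - 1) + F = 0)
    (h3 : B * (1 - α) * (-1 - β) + D * (1 - α) + E * (-1 - β) + F = 0)
    (h4 : B * (1 + α) * (1 + β) + D * (1 + α) + E * (1 + β) + F = 0) :
    B = 0 ∧ D = 0 ∧ E = 0 ∧ F = 0 := by
  have hB : B = 0 := by
    have key : B * (1 - α ^ 2 - β ^ 2) = 0 := by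
      linear_combination (1 / 4) * h4 - (1 / 4) * h1 + (1 / 4) * h2 - (1 / 4) * h3
        - (α / 4) * (h3 + h4 - h1 - h2) - (β / 4) * (h4 + h1 - h2 - h3)
    rcases mul_eq_zero.mp key with hB | hz
    · exact hB
    · exact absurd hz h
  refine ⟨hB, ?_, ?_, ?_⟩
  · linear_combination (1 / 4) * (h3 + h4 - h1 - h2) - α * hB
  · linear_combination (1 / 4) * (h4 + h1 - h2 - h3) - β * hB
  · linear_combination (1 / 4) * (h1 + h2 + h3 + h4) - α * β * hB

set_option maxHeartbeats 6400000 in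
/-- Unisolvence of the quadrilateral Wilson element: on a convex quadrilateral
(|α| + |β| < 1), a quadratic polynomial is uniquely determined by its values at the
four vertices together with the integrals over Q of its second derivatives along the
directions r and s. -/
theorem quadrilateral_wilson_unisolvence
    (a₁ a₂ a₃ a₄ O r s : ℝ × ℝ) (α β : ℝ)
    (hO : O = (1/4 : ℝ) • (a₁ + a₂ + a₃ + a₄))
    (hr : r = (1/4 : ℝ) • (a₃ + a₄ - a₁ - a₂))
    (hs : s = (1/4 : ℝ) • (a₄ + a₁ - a₂ - a₃))
    (hind : LinearIndependent ℝ ![r, s])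
    (ha₄ : a₄ = O + (1 + α) • r + (1 + β) • s)
    (hconv : |α| + |β| < 1) :
    ∀ v₁ v₂ v₃ v₄ c₅ c₆ : ℝ,
      ∃! p : ℝ × ℝ → ℝ,
        (∃ c20 c11 c02 c10 c01 c00 : ℝ,
          p = fun x => c20 * x.1 ^ 2 + c11 * x.1 * x.2 + c02 * x.2 ^ 2
            + c10 * x.1 + c01 * x.2 + c00) ∧
        p a₁ = v₁ ∧ p a₂ = v₂ ∧ p a₃ = v₃ ∧ p a₄ = v₄ ∧
        (∫ x in convexHull ℝ {a₁, a₂, a₃, a₄}, iteratedFDeriv ℝ 2 p x ![r, r]) = c₅ ∧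
        (∫ x in convexHull ℝ {a₁, a₂, a₃, a₄}, iteratedFDeriv ℝ 2 p x ![s, s]) = c₆ := by
  -- component equations
  rw [Prod.ext_iff] at hO hr hs ha₄
  simp only [Prod.smul_fst, Prod.smul_snd, Prod.fst_add, Prod.snd_add, Prod.fst_sub,
    Prod.snd_sub, smul_eq_mul] at hO hr hs ha₄
  obtain ⟨hO1, hO2⟩ := hO
  obtain ⟨hr1, hr2⟩ := hr
  obtain ⟨hs1, hs2⟩ := hs
  obtain ⟨h41, h42⟩ := ha₄
  -- vertex coordinates
  have ha11 : a₁.1 = O.1 + (-1-α)*r.1 + (1-β)*s.1 := by linear_combination (-1)*h41 - 2*hO1 - 2*hs1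
  have ha12 : a₁.2 = O.2 + (-1-α)*r.2 + (1-β)*s.2 := by linear_combination (-1)*h42 - 2*hO2 - 2*hs2
  have ha21 : a₂.1 = O.1 + (α-1)*r.1 + (β-1)*s.1 := by linear_combination h41 + 2*hr1 + 2*hs1
  have ha22 : a₂.2 = O.2 + (α-1)*r.2 + (β-1)*s.2 := by linear_combination h42 + 2*hr2 + 2*hs2
  have ha31 : a₃.1 = O.1 + (1-α)*r.1 + (-1-β)*s.1 := by linear_combination (-1)*h41 - 2*hO1 - 2*hr1
  have ha32 : a₃.2 = O.2 + (1-α)*r.2 + (-1-β)*s.2 := by linear_combination (-1)*h42 - 2*hO2 - 2*hr2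
  have ha41 : a₄.1 = O.1 + (1+α)*r.1 + (1+β)*s.1 := by linear_combination h41
  have ha42 : a₄.2 = O.2 + (1+α)*r.2 + (1+β)*s.2 := by linear_combination h42
  -- nondegeneracy facts
  have hd : r.1 * s.2 - r.2 * s.1 ≠ 0 := wilson_det_ne r s hind
  have h1ab : 1 - α ^ 2 - β ^ 2 ≠ 0 := by
    have : 0 < 1 - α ^ 2 - β ^ 2 := by
      nlinarith [sq_abs α, sq_abs β, mul_nonneg (abs_nonneg α) (abs_nonneg β),
        abs_nonneg α, abs_nonneg β]
    exact this.ne'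
  have hVpos : 0 < (volume (convexHull ℝ {a₁, a₂, a₃, a₄} : Set (ℝ × ℝ))).toReal := by
    apply wilson_vol_pos
    have hdet : (a₄.1 - a₂.1) * (a₁.2 - a₂.2) - (a₄.2 - a₂.2) * (a₁.1 - a₂.1)
        = 4 * (1 + α - β) * (r.1 * s.2 - r.2 * s.1) := by
      rw [ha11, ha12, ha21, ha22, ha41, ha42]; ring
    rw [hdet]
    have hab : 0 < 1 + α - β := by linarith [neg_abs_le α, le_abs_self β]
    exact mul_ne_zero (mul_ne_zero (by norm_num) hab.ne') hd
  intro v₁ v₂ v₃ v₄ c₅ c₆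
  set V := (volume (convexHull ℝ {a₁, a₂, a₃, a₄} : Set (ℝ × ℝ))).toReal with hVdef
  -- the integral of the second derivative of a quadratic
  have hInt : ∀ (k20 k11 k02 k10 k01 k00 : ℝ) (u : ℝ × ℝ),
      (∫ x in convexHull ℝ {a₁, a₂, a₃, a₄},
        iteratedFDeriv ℝ 2 (fun y : ℝ × ℝ => k20 * y.1 ^ 2 + k11 * y.1 * y.2 + k02 * y.2 ^ 2
          + k10 * y.1 + k01 * y.2 + k00) x ![u, u])
      = V * (2 * k20 * u.1 ^ 2 + 2 * k11 * (u.1 * u.2) + 2 * k02 * u.2 ^ 2) := by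
    intro k20 k11 k02 k10 k01 k00 u
    simp_rw [wilson_iter2]
    rw [setIntegral_const, smul_eq_mul, hVdef, measureReal_def]
  -- coordinates
  obtain ⟨u1, hu1⟩ : ∃ t, s.2 / (r.1 * s.2 - r.2 * s.1) = t := ⟨_, rfl⟩
  obtain ⟨u2, hu2⟩ : ∃ t, -s.1 / (r.1 * s.2 - r.2 * s.1) = t := ⟨_, rfl⟩
  obtain ⟨u0, hu0⟩ : ∃ t, (s.1 * O.2 - s.2 * O.1) / (r.1 * s.2 - r.2 * s.1) = t := ⟨_, rfl⟩
  obtain ⟨w1, hw1⟩ : ∃ t, -r.2 / (r.1 * s.2 - r.2 * s.1) = t := ⟨_, rfl⟩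
  obtain ⟨w2, hw2⟩ : ∃ t, r.1 / (r.1 * s.2 - r.2 * s.1) = t := ⟨_, rfl⟩
  obtain ⟨w0, hw0⟩ : ∃ t, (r.2 * O.1 - r.1 * O.2) / (r.1 * s.2 - r.2 * s.1) = t := ⟨_, rfl⟩
  have hXgen : ∀ ξ η : ℝ, u1 * (O.1 + ξ*r.1 + η*s.1) + u2 * (O.2 + ξ*r.2 + η*s.2) + u0 = ξ := by
    intro ξ η
    rw [← hu1, ← hu2, ← hu0]
    linear_combination ξ * mul_inv_cancel₀ hd
  have hYgen : ∀ ξ η : ℝ, w1 * (O.1 + ξ*r.1 + η*s.1) + w2 * (O.2 + ξ*r.2 + η*s.2) + w0 = η := by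
    intro ξ η
    rw [← hw1, ← hw2, ← hw0]
    linear_combination η * mul_inv_cancel₀ hd
  have hur : u1 * r.1 + u2 * r.2 = 1 := by rw [← hu1, ← hu2]; linear_combination mul_inv_cancel₀ hd
  have hwr : w1 * r.1 + w2 * r.2 = 0 := by rw [← hw1, ← hw2]; field_simp; ring
  have hus : u1 * s.1 + u2 * s.2 = 0 := by rw [← hu1, ← hu2]; field_simp; ring
  have hws : w1 * s.1 + w2 * s.2 = 1 := by rw [← hw1, ← hw2]; linear_combination mul_inv_cancel₀ hd
  have hX1 : u1 * a₁.1 + u2 * a₁.2 + u0 = -1 - α := by rw [ha11, ha12]; exact hXgen _ _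
  have hY1 : w1 * a₁.1 + w2 * a₁.2 + w0 = 1 - β := by rw [ha11, ha12]; exact hYgen _ _
  have hX2 : u1 * a₂.1 + u2 * a₂.2 + u0 = α - 1 := by rw [ha21, ha22]; exact hXgen _ _
  have hY2 : w1 * a₂.1 + w2 * a₂.2 + w0 = β - 1 := by rw [ha21, ha22]; exact hYgen _ _
  have hX3 : u1 * a₃.1 + u2 * a₃.2 + u0 = 1 - α := by rw [ha31, ha32]; exact hXgen _ _
  have hY3 : w1 * a₃.1 + w2 * a₃.2 + w0 = -1 - β := by rw [ha31, ha32]; exact hYgen _ _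
  have hX4 : u1 * a₄.1 + u2 * a₄.2 + u0 = 1 + α := by rw [ha41, ha42]; exact hXgen _ _
  have hY4 : w1 * a₄.1 + w2 * a₄.2 + w0 = 1 + β := by rw [ha41, ha42]; exact hYgen _ _
  -- solve the system
  have h2V : (2 * V : ℝ) ≠ 0 := by positivity
  obtain ⟨A, hA⟩ : ∃ A : ℝ, 2 * V * A = c₅ := ⟨c₅ / (2 * V), by field_simp⟩
  obtain ⟨C, hC⟩ : ∃ C : ℝ, 2 * V * C = c₆ := ⟨c₆ / (2 * V), by field_simp⟩
  obtain ⟨B, D, E, F, hv1, hv2, hv3, hv4⟩ := wilson_solve4 α β v₁ v₂ v₃ v₄ A C h1ab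
  have hpoly : (fun x : ℝ × ℝ => A * (u1*x.1 + u2*x.2 + u0)^2
        + B * (u1*x.1 + u2*x.2 + u0) * (w1*x.1 + w2*x.2 + w0)
        + C * (w1*x.1 + w2*x.2 + w0)^2
        + D * (u1*x.1 + u2*x.2 + u0) + E * (w1*x.1 + w2*x.2 + w0) + F)
      = fun x : ℝ × ℝ =>
        (A*u1^2 + B*(u1*w1) + C*w1^2) * x.1 ^ 2
        + (2*A*u1*u2 + B*(u1*w2 + u2*w1) + 2*C*w1*w2) * x.1 * x.2
        + (A*u2^2 + B*(u2*w2) + C*w2^2) * x.2 ^ 2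
        + (2*A*u1*u0 + B*(u1*w0 + u0*w1) + 2*C*w1*w0 + D*u1 + E*w1) * x.1
        + (2*A*u2*u0 + B*(u2*w0 + u0*w2) + 2*C*w2*w0 + D*u2 + E*w2) * x.2
        + (A*u0^2 + B*(u0*w0) + C*w0^2 + D*u0 + E*w0 + F) := by
    funext x; ring
  have hkr : (A*u1^2 + B*(u1*w1) + C*w1^2) * r.1^2
      + (2*A*u1*u2 + B*(u1*w2 + u2*w1) + 2*C*w1*w2) * (r.1*r.2)
      + (A*u2^2 + B*(u2*w2) + C*w2^2) * r.2^2 = A := by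
    linear_combination (A*(u1*r.1 + u2*r.2 + 1))*hur
      + (B*(u1*r.1 + u2*r.2) + C*(w1*r.1 + w2*r.2))*hwr
  have hks : (A*u1^2 + B*(u1*w1) + C*w1^2) * s.1^2
      + (2*A*u1*u2 + B*(u1*w2 + u2*w1) + 2*C*w1*w2) * (s.1*s.2)
      + (A*u2^2 + B*(u2*w2) + C*w2^2) * s.2^2 = C := by
    linear_combination (C*(w1*s.1 + w2*s.2 + 1))*hws
      + (B*(w1*s.1 + w2*s.2) + A*(u1*s.1 + u2*s.2))*hus
  refine ⟨_, ⟨⟨_, _, _, _, _, _, hpoly⟩, ?_, ?_, ?_, ?_, ?_, ?_⟩, ?_⟩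
  · show A * (u1*a₁.1 + u2*a₁.2 + u0)^2
        + B * (u1*a₁.1 + u2*a₁.2 + u0) * (w1*a₁.1 + w2*a₁.2 + w0)
        + C * (w1*a₁.1 + w2*a₁.2 + w0)^2
        + D * (u1*a₁.1 + u2*a₁.2 + u0) + E * (w1*a₁.1 + w2*a₁.2 + w0) + F = v₁
    rw [hX1, hY1]; exact hv1
  · show A * (u1*a₂.1 + u2*a₂.2 + u0)^2
        + B * (u1*a₂.1 + u2*a₂.2 + u0) * (w1*a₂.1 + w2*a₂.2 + w0)
        + C * (w1*a₂.1 + w2*a₂.2 + w0)^2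
        + D * (u1*a₂.1 + u2*a₂.2 + u0) + E * (w1*a₂.1 + w2*a₂.2 + w0) + F = v₂
    rw [hX2, hY2]; exact hv2
  · show A * (u1*a₃.1 + u2*a₃.2 + u0)^2
        + B * (u1*a₃.1 + u2*a₃.2 + u0) * (w1*a₃.1 + w2*a₃.2 + w0)
        + C * (w1*a₃.1 + w2*a₃.2 + w0)^2
        + D * (u1*a₃.1 + u2*a₃.2 + u0) + E * (w1*a₃.1 + w2*a₃.2 + w0) + F = v₃
    rw [hX3, hY3]; exact hv3
  · show A * (u1*a₄.1 + u2*a₄.2 + u0)^2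
        + B * (u1*a₄.1 + u2*a₄.2 + u0) * (w1*a₄.1 + w2*a₄.2 + w0)
        + C * (w1*a₄.1 + w2*a₄.2 + w0)^2
        + D * (u1*a₄.1 + u2*a₄.2 + u0) + E * (w1*a₄.1 + w2*a₄.2 + w0) + F = v₄
    rw [hX4, hY4]; exact hv4
  · rw [hpoly, hInt]
    linear_combination (2*V)*hkr + hA
  · rw [hpoly, hInt]
    linear_combination (2*V)*hks + hC
  · rintro q ⟨⟨b20, b11, b02, b10, b01, b00, rfl⟩, hq1, hq2, hq3, hq4, hq5, hq6⟩
    rw [hInt] at hq5 hq6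
    have hAq : b20*r.1^2 + b11*(r.1*r.2) + b02*r.2^2 = A := by
      apply mul_left_cancel₀ h2V
      linear_combination hq5 - hA
    have hCq : b20*s.1^2 + b11*(s.1*s.2) + b02*s.2^2 = C := by
      apply mul_left_cancel₀ h2V
      linear_combination hq6 - hC
    have hq1' : b20*a₁.1^2 + b11*a₁.1*a₁.2 + b02*a₁.2^2 + b10*a₁.1 + b01*a₁.2 + b00 = v₁ := hq1
    have hq2' : b20*a₂.1^2 + b11*a₂.1*a₂.2 + b02*a₂.2^2 + b10*a₂.1 + b01*a₂.2 + b00 = v₂ := hq2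
    have hq3' : b20*a₃.1^2 + b11*a₃.1*a₃.2 + b02*a₃.2^2 + b10*a₃.1 + b01*a₃.2 + b00 = v₃ := hq3
    have hq4' : b20*a₄.1^2 + b11*a₄.1*a₄.2 + b02*a₄.2^2 + b10*a₄.1 + b01*a₄.2 + b00 = v₄ := hq4
    rw [ha11, ha12] at hq1'
    rw [ha21, ha22] at hq2'
    rw [ha31, ha32] at hq3'
    rw [ha41, ha42] at hq4'
    have H1 : (b20*r.1^2 + b11*(r.1*r.2) + b02*r.2^2) * (-1-α)^2
        + (2*b20*(r.1*s.1) + b11*(r.1*s.2 + r.2*s.1) + 2*b02*(r.2*s.2)) * (-1-α) * (1-β)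
        + (b20*s.1^2 + b11*(s.1*s.2) + b02*s.2^2) * (1-β)^2
        + (2*b20*(O.1*r.1) + b11*(O.1*r.2 + O.2*r.1) + 2*b02*(O.2*r.2) + b10*r.1 + b01*r.2) * (-1-α)
        + (2*b20*(O.1*s.1) + b11*(O.1*s.2 + O.2*s.1) + 2*b02*(O.2*s.2) + b10*s.1 + b01*s.2) * (1-β)
        + (b20*O.1^2 + b11*(O.1*O.2) + b02*O.2^2 + b10*O.1 + b01*O.2 + b00) = v₁ := by
      linear_combination hq1'
    have H2 : (b20*r.1^2 + b11*(r.1*r.2) + b02*r.2^2) * (α-1)^2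
        + (2*b20*(r.1*s.1) + b11*(r.1*s.2 + r.2*s.1) + 2*b02*(r.2*s.2)) * (α-1) * (β-1)
        + (b20*s.1^2 + b11*(s.1*s.2) + b02*s.2^2) * (β-1)^2
        + (2*b20*(O.1*r.1) + b11*(O.1*r.2 + O.2*r.1) + 2*b02*(O.2*r.2) + b10*r.1 + b01*r.2) * (α-1)
        + (2*b20*(O.1*s.1) + b11*(O.1*s.2 + O.2*s.1) + 2*b02*(O.2*s.2) + b10*s.1 + b01*s.2) * (β-1)
        + (b20*O.1^2 + b11*(O.1*O.2) + b02*O.2^2 + b10*O.1 + b01*O.2 + b00) = v₂ := by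
      linear_combination hq2'
    have H3 : (b20*r.1^2 + b11*(r.1*r.2) + b02*r.2^2) * (1-α)^2
        + (2*b20*(r.1*s.1) + b11*(r.1*s.2 + r.2*s.1) + 2*b02*(r.2*s.2)) * (1-α) * (-1-β)
        + (b20*s.1^2 + b11*(s.1*s.2) + b02*s.2^2) * (-1-β)^2
        + (2*b20*(O.1*r.1) + b11*(O.1*r.2 + O.2*r.1) + 2*b02*(O.2*r.2) + b10*r.1 + b01*r.2) * (1-α)
        + (2*b20*(O.1*s.1) + b11*(O.1*s.2 + O.2*s.1) + 2*b02*(O.2*s.2) + b10*s.1 + b01*s.2) * (-1-β)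
        + (b20*O.1^2 + b11*(O.1*O.2) + b02*O.2^2 + b10*O.1 + b01*O.2 + b00) = v₃ := by
      linear_combination hq3'
    have H4 : (b20*r.1^2 + b11*(r.1*r.2) + b02*r.2^2) * (1+α)^2
        + (2*b20*(r.1*s.1) + b11*(r.1*s.2 + r.2*s.1) + 2*b02*(r.2*s.2)) * (1+α) * (1+β)
        + (b20*s.1^2 + b11*(s.1*s.2) + b02*s.2^2) * (1+β)^2
        + (2*b20*(O.1*r.1) + b11*(O.1*r.2 + O.2*r.1) + 2*b02*(O.2*r.2) + b10*r.1 + b01*r.2) * (1+α)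
        + (2*b20*(O.1*s.1) + b11*(O.1*s.2 + O.2*s.1) + 2*b02*(O.2*s.2) + b10*s.1 + b01*s.2) * (1+β)
        + (b20*O.1^2 + b11*(O.1*O.2) + b02*O.2^2 + b10*O.1 + b01*O.2 + b00) = v₄ := by
      linear_combination hq4'
    have g1 : ((2*b20*(r.1*s.1) + b11*(r.1*s.2 + r.2*s.1) + 2*b02*(r.2*s.2)) - B) * (-1-α) * (1-β)
        + ((2*b20*(O.1*r.1) + b11*(O.1*r.2 + O.2*r.1) + 2*b02*(O.2*r.2) + b10*r.1 + b01*r.2) - D) * (-1-α)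
        + ((2*b20*(O.1*s.1) + b11*(O.1*s.2 + O.2*s.1) + 2*b02*(O.2*s.2) + b10*s.1 + b01*s.2) - E) * (1-β)
        + ((b20*O.1^2 + b11*(O.1*O.2) + b02*O.2^2 + b10*O.1 + b01*O.2 + b00) - F) = 0 := by
      linear_combination H1 - hv1 - (-1-α)^2*hAq - (1-β)^2*hCq
    have g2 : ((2*b20*(r.1*s.1) + b11*(r.1*s.2 + r.2*s.1) + 2*b02*(r.2*s.2)) - B) * (α-1) * (β-1)
        + ((2*b20*(O.1*r.1) + b11*(O.1*r.2 + O.2*r.1) + 2*b02*(O.2*r.2) + b10*r.1 + b01*r.2) - D) * (α-1)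
        + ((2*b20*(O.1*s.1) + b11*(O.1*s.2 + O.2*s.1) + 2*b02*(O.2*s.2) + b10*s.1 + b01*s.2) - E) * (β-1)
        + ((b20*O.1^2 + b11*(O.1*O.2) + b02*O.2^2 + b10*O.1 + b01*O.2 + b00) - F) = 0 := by
      linear_combination H2 - hv2 - (α-1)^2*hAq - (β-1)^2*hCq
    have g3 : ((2*b20*(r.1*s.1) + b11*(r.1*s.2 + r.2*s.1) + 2*b02*(r.2*s.2)) - B) * (1-α) * (-1-β)
        + ((2*b20*(O.1*r.1) + b11*(O.1*r.2 + O.2*r.1) + 2*b02*(O.2*r.2) + b10*r.1 + b01*r.2) - D) * (1-α)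
        + ((2*b20*(O.1*s.1) + b11*(O.1*s.2 + O.2*s.1) + 2*b02*(O.2*s.2) + b10*s.1 + b01*s.2) - E) * (-1-β)
        + ((b20*O.1^2 + b11*(O.1*O.2) + b02*O.2^2 + b10*O.1 + b01*O.2 + b00) - F) = 0 := by
      linear_combination H3 - hv3 - (1-α)^2*hAq - (-1-β)^2*hCq
    have g4 : ((2*b20*(r.1*s.1) + b11*(r.1*s.2 + r.2*s.1) + 2*b02*(r.2*s.2)) - B) * (1+α) * (1+β)
        + ((2*b20*(O.1*r.1) + b11*(O.1*r.2 + O.2*r.1) + 2*b02*(O.2*r.2) + b10*r.1 + b01*r.2) - D) * (1+α)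
        + ((2*b20*(O.1*s.1) + b11*(O.1*s.2 + O.2*s.1) + 2*b02*(O.2*s.2) + b10*s.1 + b01*s.2) - E) * (1+β)
        + ((b20*O.1^2 + b11*(O.1*O.2) + b02*O.2^2 + b10*O.1 + b01*O.2 + b00) - F) = 0 := by
      linear_combination H4 - hv4 - (1+α)^2*hAq - (1+β)^2*hCq
    obtain ⟨gB, gD, gE, gF⟩ := wilson_uniq4 α β _ _ _ _ h1ab g1 g2 g3 g4
    have hBq : 2*b20*(r.1*s.1) + b11*(r.1*s.2 + r.2*s.1) + 2*b02*(r.2*s.2) = B := by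
      linarith [gB]
    have hDq : 2*b20*(O.1*r.1) + b11*(O.1*r.2 + O.2*r.1) + 2*b02*(O.2*r.2) + b10*r.1 + b01*r.2 = D := by
      linarith [gD]
    have hEq : 2*b20*(O.1*s.1) + b11*(O.1*s.2 + O.2*s.1) + 2*b02*(O.2*s.2) + b10*s.1 + b01*s.2 = E := by
      linarith [gE]
    have hFq : b20*O.1^2 + b11*(O.1*O.2) + b02*O.2^2 + b10*O.1 + b01*O.2 + b00 = F := by
      linarith [gF]
    funext x
    show b20*x.1^2 + b11*x.1*x.2 + b02*x.2^2 + b10*x.1 + b01*x.2 + b00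
      = A * (u1*x.1 + u2*x.2 + u0)^2
        + B * (u1*x.1 + u2*x.2 + u0) * (w1*x.1 + w2*x.2 + w0)
        + C * (w1*x.1 + w2*x.2 + w0)^2
        + D * (u1*x.1 + u2*x.2 + u0) + E * (w1*x.1 + w2*x.2 + w0) + F
    obtain ⟨t, ht⟩ : ∃ t, u1*x.1 + u2*x.2 + u0 = t := ⟨_, rfl⟩
    obtain ⟨t', ht'⟩ : ∃ t, w1*x.1 + w2*x.2 + w0 = t := ⟨_, rfl⟩
    have hx1 : x.1 = O.1 + t*r.1 + t'*s.1 := by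
      rw [← ht, ← ht', ← hu1, ← hu2, ← hu0, ← hw1, ← hw2, ← hw0]
      linear_combination (O.1 - x.1) * mul_inv_cancel₀ hd
    have hx2 : x.2 = O.2 + t*r.2 + t'*s.2 := by
      rw [← ht, ← ht', ← hu1, ← hu2, ← hu0, ← hw1, ← hw2, ← hw0]
      linear_combination (O.2 - x.2) * mul_inv_cancel₀ hd
    rw [ht, ht', hx1, hx2]
    linear_combination t^2*hAq + (t*t')*hBq + t'^2*hCq + t*hDq + t'*hEq + hFq
end

section
/- Let L, H > 0 and let K = [0,L] × [0,H] be a rectangle with vertices a₁ = (0,H), a₂ = (0,0), a₃ = (L,0), a₄ = (L,H) and edges Γ₁ = {0}×[0,H], Γ₂ = [0,L]×{0}, Γ₃ = {L}×[0,H], Γ₄ = [0,L]×{H}. Then for every polynomial function p : ℝ² → ℝ of total degree at most 2, the following two identities hold: ⨍_{Γ₁} ∂p/∂x + ⨍_{Γ₃} ∂p/∂x = (p(a₄) − p(a₁))/L + (p(a₃) − p(a₂))/L, and ⨍_{Γ₂} ∂p/∂y + ⨍_{Γ₄} ∂p/∂y = (p(a₄) − p(a₃))/H + (p(a₁) − p(a₂))/H.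 -/
private lemma integral_affine (a b : ℝ) : ∫ t in (0:ℝ)..1, (a * t + b) = a / 2 + b := by
  have h1 : IntervalIntegrable (fun t : ℝ => a * t) MeasureTheory.volume 0 1 := by
    apply Continuous.intervalIntegrable; continuity
  rw [intervalIntegral.integral_add h1 intervalIntegrable_const,
    intervalIntegral.integral_const_mul, integral_id]
  simp
  ring

/-- On the rectangle [0,L] × [0,H] with vertices a₁ = (0,H), a₂ = (0,0), a₃ = (L,0),
a₄ = (L,H), every quadratic polynomial p satisfies the two compatibility identities
relating its vertex values with the edge averages of its first partial derivatives. -/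
theorem rectangle_quadratic_compatibility_identities
    (L H : ℝ) (hL : 0 < L) (hH : 0 < H)
    (p : ℝ × ℝ → ℝ) (c20 c11 c02 c10 c01 c00 : ℝ)
    (hp : p = fun z => c20 * z.1 ^ 2 + c11 * z.1 * z.2 + c02 * z.2 ^ 2
      + c10 * z.1 + c01 * z.2 + c00) :
    edgeAvg (0, 0) (0, H) (fun z => fderiv ℝ p z (1, 0))
        + edgeAvg (L, 0) (L, H) (fun z => fderiv ℝ p z (1, 0))
      = (p (L, H) - p (0, H)) / L + (p (L, 0) - p (0, 0)) / L ∧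
    edgeAvg (0, 0) (L, 0) (fun z => fderiv ℝ p z (0, 1))
        + edgeAvg (0, H) (L, H) (fun z => fderiv ℝ p z (0, 1))
      = (p (L, H) - p (L, 0)) / H + (p (0, H) - p (0, 0)) / H := by
  subst hp
  have hx : ∀ z : ℝ × ℝ, fderiv ℝ (fun z : ℝ×ℝ => c20 * z.1 ^ 2 + c11 * z.1 * z.2
      + c02 * z.2 ^ 2 + c10 * z.1 + c01 * z.2 + c00) z (1, 0)
      = 2*c20*z.1 + c11*z.2 + c10 := by
    intro z
    have h1 : HasFDerivAt (fun z : ℝ×ℝ => z.1) (ContinuousLinearMap.fst ℝ ℝ ℝ) z := hasFDerivAt_fst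
    have h2 : HasFDerivAt (fun z : ℝ×ℝ => z.2) (ContinuousLinearMap.snd ℝ ℝ ℝ) z := hasFDerivAt_snd
    simp only [pow_two, mul_assoc]
    have h := (((((h1.mul h1).const_mul c20).add ((h1.mul h2).const_mul c11)).add
        ((h2.mul h2).const_mul c02)).add (h1.const_mul c10)).add (h2.const_mul c01) |>.add_const c00
    have h' : HasFDerivAt (fun z : ℝ×ℝ => c20 * (z.1 * z.1) + c11 * (z.1 * z.2) + c02 * (z.2 * z.2) + c10 * z.1 + c01 * z.2 + c00) _ z := h
    rw [h'.fderiv]; simp; ring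
  have hy : ∀ z : ℝ × ℝ, fderiv ℝ (fun z : ℝ×ℝ => c20 * z.1 ^ 2 + c11 * z.1 * z.2
      + c02 * z.2 ^ 2 + c10 * z.1 + c01 * z.2 + c00) z (0, 1)
      = c11*z.1 + 2*c02*z.2 + c01 := by
    intro z
    have h1 : HasFDerivAt (fun z : ℝ×ℝ => z.1) (ContinuousLinearMap.fst ℝ ℝ ℝ) z := hasFDerivAt_fst
    have h2 : HasFDerivAt (fun z : ℝ×ℝ => z.2) (ContinuousLinearMap.snd ℝ ℝ ℝ) z := hasFDerivAt_snd
    simp only [pow_two, mul_assoc]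
    have h := (((((h1.mul h1).const_mul c20).add ((h1.mul h2).const_mul c11)).add
        ((h2.mul h2).const_mul c02)).add (h1.const_mul c10)).add (h2.const_mul c01) |>.add_const c00
    have h' : HasFDerivAt (fun z : ℝ×ℝ => c20 * (z.1 * z.1) + c11 * (z.1 * z.2) + c02 * (z.2 * z.2) + c10 * z.1 + c01 * z.2 + c00) _ z := h
    rw [h'.fderiv]; simp; ring
  constructor
  · have e1 : edgeAvg (0, 0) (0, H) (fun z : ℝ×ℝ => fderiv ℝ (fun z : ℝ×ℝ => c20 * z.1 ^ 2
        + c11 * z.1 * z.2 + c02 * z.2 ^ 2 + c10 * z.1 + c01 * z.2 + c00) z (1, 0))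
        = (c11 * H) / 2 + c10 := by
      unfold edgeAvg
      have : ∀ t : ℝ, ((1 - t) • ((0:ℝ), (0:ℝ)) + t • ((0:ℝ), H)) = ((0:ℝ), t * H) := by
        intro t; simp [Prod.ext_iff]; try ring
      simp only [this, hx]
      have := integral_affine (c11 * H) c10
      rw [← this]
      congr 1; funext t; ring
    have e2 : edgeAvg (L, 0) (L, H) (fun z : ℝ×ℝ => fderiv ℝ (fun z : ℝ×ℝ => c20 * z.1 ^ 2
        + c11 * z.1 * z.2 + c02 * z.2 ^ 2 + c10 * z.1 + c01 * z.2 + c00) z (1, 0))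
        = 2 * c20 * L + (c11 * H) / 2 + c10 := by
      unfold edgeAvg
      have : ∀ t : ℝ, ((1 - t) • (L, (0:ℝ)) + t • (L, H)) = (L, t * H) := by
        intro t; simp [Prod.ext_iff]; try ring
      simp only [this, hx]
      have := integral_affine (c11 * H) (2 * c20 * L + c10)
      rw [show 2 * c20 * L + (c11 * H) / 2 + c10 = c11 * H / 2 + (2 * c20 * L + c10) by ring,
        ← this]
      congr 1; funext t; ring
    rw [e1, e2]
    field_simp
    ring
  · have e1 : edgeAvg (0, 0) (L, 0) (fun z : ℝ×ℝ => fderiv ℝ (fun z : ℝ×ℝ => c20 * z.1 ^ 2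
        + c11 * z.1 * z.2 + c02 * z.2 ^ 2 + c10 * z.1 + c01 * z.2 + c00) z (0, 1))
        = (c11 * L) / 2 + c01 := by
      unfold edgeAvg
      have : ∀ t : ℝ, ((1 - t) • ((0:ℝ), (0:ℝ)) + t • (L, (0:ℝ))) = (t * L, (0:ℝ)) := by
        intro t; simp [Prod.ext_iff]; try ring
      simp only [this, hy]
      have := integral_affine (c11 * L) c01
      rw [← this]
      congr 1; funext t; ring
    have e2 : edgeAvg (0, H) (L, H) (fun z : ℝ×ℝ => fderiv ℝ (fun z : ℝ×ℝ => c20 * z.1 ^ 2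
        + c11 * z.1 * z.2 + c02 * z.2 ^ 2 + c10 * z.1 + c01 * z.2 + c00) z (0, 1))
        = (c11 * L) / 2 + 2 * c02 * H + c01 := by
      unfold edgeAvg
      have : ∀ t : ℝ, ((1 - t) • ((0:ℝ), H) + t • (L, H)) = (t * L, H) := by
        intro t; simp [Prod.ext_iff]; try ring
      simp only [this, hy]
      have := integral_affine (c11 * L) (2 * c02 * H + c01)
      rw [show (c11 * L) / 2 + 2 * c02 * H + c01 = c11 * L / 2 + (2 * c02 * H + c01) by ring,
        ← this]
      congr 1; funext t; ring
    rw [e1, e2]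
    field_simp
    ring
end

section
/- For all real numbers α, β, γ, κ, σ, δ > 0, the set of vectors (x¹₁, x¹₂, x²₁, x²₂, y¹₁, y¹₂, y¹₃, y²₁, y²₂, y²₃, z¹₁, z¹₂, z²₁, z²₂, z³₁, z³₂) ∈ ℝ¹⁶ satisfying the eighteen linear equations x¹₁/κ = z¹₁; −x¹₁/α = y¹₁; (x¹₂ − x¹₁)/σ = z¹₂ + z¹₁; −(x¹₂ + x¹₁)/α = y¹₂; −x¹₂/α = y¹₃; −x¹₂/δ = z¹₂; (x¹₁ + x²₁)/κ = z²₁; (x¹₁ − x²₁)/β = y¹₁ + y²₁; (x¹₁ + x¹₂ − x²₁ − x²₂)/β = y¹₂ + y²₂; (x¹₂ + x²₂ − x¹₁ − x²₁)/σ = z²₂ + z²₁; −(x¹₂ + x²₂)/δ = z²₂; (x¹₂ − x²₂)/β = y¹₃ + y²₃; x²₁/κ = z³₁; x²₁/γ = y²₁; (x²₁ + x²₂)/γ = y²₂; (x²₂ − x²₁)/σ = z³₂ + z³₁; −x²₂/δ = z³₂; x²₂/γ = y²₃, is a linear subspace of ℝ¹⁶ of dimension exactly 1. -/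
/-- The solution set of the eighteen per-cell compatibility equations for the
homogeneous reduced quadrilateral Morley space on a 3×3 rectangular subdivision
(with column widths κ, σ, δ and row heights α, β, γ) is a linear subspace of ℝ¹⁶
of dimension exactly 1.  The 16 unknowns are ordered as
(x¹₁, x¹₂, x²₁, x²₂, y¹₁, y¹₂, y¹₃, y²₁, y²₂, y²₃, z¹₁, z¹₂, z²₁, z²₂, z³₁, z³₂). -/
theorem rqm_three_by_three_solution_space_dim_one
    (α β γ κ σ δ : ℝ)
    (hα : 0 < α) (hβ : 0 < β) (hγ : 0 < γ)
    (hκ : 0 < κ) (hσ : 0 < σ) (hδ : 0 < δ) :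
    ∃ M : Submodule ℝ (Fin 16 → ℝ),
      (M : Set (Fin 16 → ℝ)) =
        {v : Fin 16 → ℝ |
          v 0 / κ = v 10 ∧
          -v 0 / α = v 4 ∧
          (v 1 - v 0) / σ = v 11 + v 10 ∧
          -(v 1 + v 0) / α = v 5 ∧
          -v 1 / α = v 6 ∧
          -v 1 / δ = v 11 ∧
          (v 0 + v 2) / κ = v 12 ∧
          (v 0 - v 2) / β = v 4 + v 7 ∧
          (v 0 + v 1 - v 2 - v 3) / β = v 5 + v 8 ∧
          (v 1 + v 3 - v 0 - v 2) / σ = v 13 + v 12 ∧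
          -(v 1 + v 3) / δ = v 13 ∧
          (v 1 - v 3) / β = v 6 + v 9 ∧
          v 2 / κ = v 14 ∧
          v 2 / γ = v 7 ∧
          (v 2 + v 3) / γ = v 8 ∧
          (v 3 - v 2) / σ = v 15 + v 14 ∧
          -v 3 / δ = v 15 ∧
          v 3 / γ = v 9} ∧
      Module.finrank ℝ M = 1 := by
  have hα' := hα.ne'; have hβ' := hβ.ne'; have hγ' := hγ.ne'
  have hκ' := hκ.ne'; have hσ' := hσ.ne'; have hδ' := hδ.ne'
  have hσδ : σ + δ ≠ 0 := by positivity
  have hκσ : κ + σ ≠ 0 := by positivity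
  have hβγ : β + γ ≠ 0 := by positivity
  have hαβ : α + β ≠ 0 := by positivity
  set w : Fin 16 → ℝ :=
    ![κ * (σ + δ) * (α * (β + γ)),
      δ * (κ + σ) * (α * (β + γ)),
      κ * (σ + δ) * (γ * (α + β)),
      δ * (κ + σ) * (γ * (α + β)),
      -(κ * (σ + δ) * (β + γ)),
      -((β + γ) * (κ * (σ + δ) + δ * (κ + σ))),
      -(δ * (κ + σ) * (β + γ)),
      κ * (σ + δ) * (α + β),
      (α + β) * (κ * (σ + δ) + δ * (κ + σ)),
      δ * (κ + σ) * (α + β),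
      (σ + δ) * (α * (β + γ)),
      -((κ + σ) * (α * (β + γ))),
      (σ + δ) * (α * (β + γ) + γ * (α + β)),
      -((κ + σ) * (α * (β + γ) + γ * (α + β))),
      (σ + δ) * (γ * (α + β)),
      -((κ + σ) * (γ * (α + β)))] with hw
  have hw0 : w 0 = κ * (σ + δ) * (α * (β + γ)) := rfl
  have hw1 : w 1 = δ * (κ + σ) * (α * (β + γ)) := rfl
  have hw2 : w 2 = κ * (σ + δ) * (γ * (α + β)) := rfl
  have hw3 : w 3 = δ * (κ + σ) * (γ * (α + β)) := rfl
  have hw4 : w 4 = -(κ * (σ + δ) * (β + γ)) := rfl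
  have hw5 : w 5 = -((β + γ) * (κ * (σ + δ) + δ * (κ + σ))) := rfl
  have hw6 : w 6 = -(δ * (κ + σ) * (β + γ)) := rfl
  have hw7 : w 7 = κ * (σ + δ) * (α + β) := rfl
  have hw8 : w 8 = (α + β) * (κ * (σ + δ) + δ * (κ + σ)) := rfl
  have hw9 : w 9 = δ * (κ + σ) * (α + β) := rfl
  have hw10 : w 10 = (σ + δ) * (α * (β + γ)) := rfl
  have hw11 : w 11 = -((κ + σ) * (α * (β + γ))) := rfl
  have hw12 : w 12 = (σ + δ) * (α * (β + γ) + γ * (α + β)) := rfl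
  have hw13 : w 13 = -((κ + σ) * (α * (β + γ) + γ * (α + β))) := rfl
  have hw14 : w 14 = (σ + δ) * (γ * (α + β)) := rfl
  have hw15 : w 15 = -((κ + σ) * (γ * (α + β))) := rfl
  refine ⟨Submodule.span ℝ {w}, ?_, ?_⟩
  · ext v
    simp only [SetLike.mem_coe, Submodule.mem_span_singleton, Set.mem_setOf_eq]
    constructor
    · rintro ⟨a, rfl⟩
      simp only [Pi.smul_apply, smul_eq_mul, hw0, hw1, hw2, hw3, hw4, hw5, hw6, hw7, hw8,
        hw9, hw10, hw11, hw12, hw13, hw14, hw15]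
      refine ⟨?_, ?_, ?_, ?_, ?_, ?_, ?_, ?_, ?_, ?_, ?_, ?_, ?_, ?_, ?_, ?_, ?_, ?_⟩ <;>
        · field_simp <;> ring
    · rintro ⟨h0, h1, h2, h3, h4, h5, h6, h7, h8, h9, h10, h11, h12, h13, h14, h15, h16, h17⟩
      rw [← h5, ← h0] at h2
      rw [← h1, ← h13] at h7
      rw [← h4, ← h17] at h11
      have r1 : v 1 * (κ * (σ + δ)) = v 0 * (δ * (κ + σ)) := by
        field_simp at h2; linear_combination h2
      have r2 : v 2 * (α * (β + γ)) = v 0 * (γ * (α + β)) := by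
        field_simp at h7; linear_combination -h7
      have r3 : v 3 * (α * (β + γ)) = v 1 * (γ * (α + β)) := by
        field_simp at h11; linear_combination -h11
      have hv1 : v 1 = v 0 * (δ * (κ + σ)) / (κ * (σ + δ)) := by
        field_simp; linear_combination r1
      have hv2 : v 2 = v 0 * (γ * (α + β)) / (α * (β + γ)) := by
        field_simp; linear_combination r2
      have hv3 : v 3 = v 1 * (γ * (α + β)) / (α * (β + γ)) := by
        field_simp; linear_combination r3
      refine ⟨v 0 / (κ * (σ + δ) * (α * (β + γ))), funext fun i => ?_⟩
      fin_cases i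
      · show v 0 / (κ * (σ + δ) * (α * (β + γ))) * w 0 = v 0
        rw [hw0]; field_simp
      · show v 0 / (κ * (σ + δ) * (α * (β + γ))) * w 1 = v 1
        rw [hw1, hv1]; field_simp
      · show v 0 / (κ * (σ + δ) * (α * (β + γ))) * w 2 = v 2
        rw [hw2, hv2]; field_simp
      · show v 0 / (κ * (σ + δ) * (α * (β + γ))) * w 3 = v 3
        rw [hw3, hv3, hv1]; field_simp
      · show v 0 / (κ * (σ + δ) * (α * (β + γ))) * w 4 = v 4
        rw [hw4, ← h1]; field_simp
      · show v 0 / (κ * (σ + δ) * (α * (β + γ))) * w 5 = v 5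
        rw [hw5, ← h3, hv1]; field_simp; ring
      · show v 0 / (κ * (σ + δ) * (α * (β + γ))) * w 6 = v 6
        rw [hw6, ← h4, hv1]; field_simp
      · show v 0 / (κ * (σ + δ) * (α * (β + γ))) * w 7 = v 7
        rw [hw7, ← h13, hv2]; field_simp
      · show v 0 / (κ * (σ + δ) * (α * (β + γ))) * w 8 = v 8
        rw [hw8, ← h14, hv3, hv2, hv1]; field_simp
      · show v 0 / (κ * (σ + δ) * (α * (β + γ))) * w 9 = v 9
        rw [hw9, ← h17, hv3, hv1]; field_simp
      · show v 0 / (κ * (σ + δ) * (α * (β + γ))) * w 10 = v 10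
        rw [hw10, ← h0]; field_simp
      · show v 0 / (κ * (σ + δ) * (α * (β + γ))) * w 11 = v 11
        rw [hw11, ← h5, hv1]; field_simp
      · show v 0 / (κ * (σ + δ) * (α * (β + γ))) * w 12 = v 12
        rw [hw12, ← h6, hv2]; field_simp
      · show v 0 / (κ * (σ + δ) * (α * (β + γ))) * w 13 = v 13
        rw [hw13, ← h10, hv3, hv1]; field_simp
      · show v 0 / (κ * (σ + δ) * (α * (β + γ))) * w 14 = v 14
        rw [hw14, ← h12, hv2]; field_simp
      · show v 0 / (κ * (σ + δ) * (α * (β + γ))) * w 15 = v 15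
        rw [hw15, ← h16, hv3, hv1]; field_simp
  · have hwne : w ≠ 0 := by
      intro h
      have h0 : w 0 = 0 := by rw [h]; rfl
      rw [hw0] at h0
      exact absurd h0 (by positivity)
    rw [finrank_span_singleton hwne]
end
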